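/- Let x = x₄ b₄ a^{k₃} x₅ b₁ a^{k₁} be a string of length m, where x₄, x₅ ∈ Σ*, a, b₁, b₄ ∈ Σ with b₁ ≠ a and b₄ ≠ a, and k₁, k₃ ≥ 1 are integers with k₃ ≥ k₁. Let ℓ₃ = |x₄ b₄|, r₃ = |x₄ b₄ a^{k₃}| - 1 and e = ℓ₃ + k₁ - 1. Then for every position i with e < i ≤ r₃, suff[i] = k₁. -/

import Mathlib

/-- `suffT x i` is the length of the longest common suffix of `x` and `x[0..i]`,
i.e. the largest `k` with `0 ≤ k ≤ i+1` such that `x[i-k+1..i] = x[m-k..m-1]`. -/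
def suffT {α : Type*} [DecidableEq α] (x : List α) (i : ℕ) : ℕ :=
  Nat.findGreatest
    (fun k => (x.take (i + 1)).drop (i + 1 - k) = x.drop (x.length - k)) (i + 1)

/-- `Cond-suf(i,d)`: either `0 < d ≤ i+1` and `x[i-d+1..m-d-1]` is a suffix of `x`,
or `i+1 < d` and `x[0..m-d-1]` is a suffix of `x`. -/
def CondSuf {α : Type*} (x : List α) (i d : ℕ) : Prop :=
  (0 < d ∧ d ≤ i + 1 ∧ (x.drop (i + 1 - d)).take (x.length - 1 - i) <:+ x) ∨
  (i + 1 < d ∧ x.take (x.length - d) <:+ x)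

/-- `Cond-occ(i,d)`: either `0 < d ≤ i` and `x[i-d] ≠ x[i]`, or `i < d`. -/
def CondOcc {α : Type*} (x : List α) (i d : ℕ) : Prop :=
  (0 < d ∧ d ≤ i ∧ x[i - d]? ≠ x[i]?) ∨ i < d

/-- `goodSuff x i = min { d | Cond-suf(i,d) and Cond-occ(i,d) }`. -/
noncomputable def goodSuff {α : Type*} (x : List α) (i : ℕ) : ℕ :=
  sInf {d | CondSuf x i d ∧ CondOcc x i d}

/-- Let `x = x₄ b₄ a^{k₃} x₅ b₁ a^{k₁}` with `b₁ ≠ a`, `b₄ ≠ a`,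
`k₁, k₃ ≥ 1`, `k₃ ≥ k₁`. Let `ℓ₃ = |x₄ b₄|`, `r₃ = |x₄ b₄ a^{k₃}| - 1` and
`e = ℓ₃ + k₁ - 1`. Then for every position `i` with `e < i ≤ r₃`, `suff[i] = k₁`. -/
theorem statement5 {α : Type*} [DecidableEq α] (x₄ x₅ : List α) (a b₁ b₄ : α) (k₁ k₃ : ℕ)
    (hb₁ : b₁ ≠ a) (hb₄ : b₄ ≠ a) (hk₁ : 1 ≤ k₁) (hk₃ : 1 ≤ k₃) (hkk : k₃ ≥ k₁)
    (x : List α)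
    (hx : x = x₄ ++ [b₄] ++ List.replicate k₃ a ++ x₅ ++ [b₁] ++ List.replicate k₁ a)
    (i : ℕ) (he : (x₄.length + 1) + k₁ - 1 < i) (hr : i ≤ (x₄.length + 1) + k₃ - 1) :
    suffT x i = k₁ := by
  subst hx
  set ℓ := x₄.length + 1 with hℓ
  set t : List α := x₅ ++ [b₁] ++ List.replicate k₁ a with ht
  set L : List α := x₄ ++ [b₄] ++ List.replicate k₃ a ++ x₅ ++ [b₁] ++ List.replicate k₁ a
    with hLdef
  have hL : L = (x₄ ++ [b₄]) ++ (List.replicate k₃ a ++ t) := by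
    simp [hLdef, ht, List.append_assoc]
  have hplen : (x₄ ++ [b₄]).length = ℓ := by simp [hℓ]
  have hlen : L.length = ℓ + k₃ + x₅.length + 1 + k₁ := by
    simp [hLdef, ht]; omega
  have hdrop : ∀ j, ℓ ≤ j → j ≤ ℓ + k₃ →
      L.drop j = List.replicate (k₃ - (j - ℓ)) a ++ t := by
    intro j hj hj2
    obtain ⟨n, rfl⟩ := Nat.exists_eq_add_of_le hj
    rw [hL, ← hplen, List.drop_length_add_append, List.drop_append,
      List.drop_replicate]
    have h0 : n - (List.replicate k₃ a).length = 0 := by simp; omega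
    have h1 : (x₄ ++ [b₄]).length + n - (x₄ ++ [b₄]).length = n := by omega
    rw [h0, List.drop_zero, h1]
  have ha : ∀ n, ℓ ≤ n → n < ℓ + k₃ → L[n]? = some a := by
    intro n h1 h2
    have hd := hdrop ℓ le_rfl (by omega)
    simp only [Nat.sub_self, Nat.sub_zero] at hd
    have hn : n = ℓ + (n - ℓ) := by omega
    rw [hn, ← List.getElem?_drop, hd,
      List.getElem?_append_left (by simp; omega), List.getElem?_replicate,
      if_pos (by omega)]
  have hb : L[ℓ + k₃ + x₅.length]? = some b₁ := by
    have hL2 : L = (x₄ ++ [b₄] ++ List.replicate k₃ a ++ x₅) ++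
        ([b₁] ++ List.replicate k₁ a) := by simp [hLdef, ht, List.append_assoc]
    have hz : (x₄ ++ [b₄] ++ List.replicate k₃ a ++ x₅).length
        = ℓ + k₃ + x₅.length := by simp; omega
    rw [hL2, List.getElem?_append_right (le_of_eq hz), hz]
    simp
  have hsufk1 : L.drop (ℓ + k₃ + x₅.length + 1) = List.replicate k₁ a := by
    have hL3 : L = (x₄ ++ [b₄] ++ List.replicate k₃ a ++ x₅ ++ [b₁]) ++
        List.replicate k₁ a := by simp [hLdef, ht, List.append_assoc]
    have hz : (x₄ ++ [b₄] ++ List.replicate k₃ a ++ x₅ ++ [b₁]).length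
        = ℓ + k₃ + x₅.length + 1 := by simp; omega
    rw [hL3, ← hz, List.drop_left]
  rw [suffT, Nat.findGreatest_eq_iff]
  refine ⟨by omega, fun _ => ?_, fun k hk1 hk2 hP => ?_⟩
  · -- P k₁
    have e3 : i + 1 - (i + 1 - k₁) = k₁ := by omega
    have eL : L.length - k₁ = ℓ + k₃ + x₅.length + 1 := by omega
    rw [List.drop_take, e3, eL, hsufk1, hdrop (i + 1 - k₁) (by omega) (by omega),
      List.take_append, List.take_replicate, List.length_replicate]
    have h0 : k₁ - (k₃ - (i + 1 - k₁ - ℓ)) = 0 := by omega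
    have h1 : k₁ ⊓ (k₃ - (i + 1 - k₁ - ℓ)) = k₁ := by omega
    rw [h0, h1, List.take_zero, List.append_nil]
  · -- ¬ P k for k₁ < k ≤ i+1
    have e1 : i + 1 - k + (k - k₁ - 1) = i - k₁ := by omega
    have e2 : L.length - k + (k - k₁ - 1) = ℓ + k₃ + x₅.length := by omega
    apply_fun (·[k - k₁ - 1]?) at hP
    rw [List.getElem?_drop, List.getElem?_drop, e1, e2, List.getElem?_take,
      if_pos (by omega), ha _ (by omega) (by omega), hb] at hP
    exact hb₁ (Option.some.inj hP).symm
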